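/- (Local Bessel inequality, cardinality bound) Let B be a regular Bourgain system on a finite abelian group G with uniform measure β on B₁, let f : G → ℂ with L_f := ‖f‖_{L²(β)} / ‖f‖_{L¹(β)}, and let ε ∈ (0,1]. If Λ ⊆ Δ := {γ ∈ Ĝ : |(f dβ)^(γ)| ≥ ε‖f‖_{L¹(β)}} is such that λ − λ' ∉ S := {γ : |β̂(γ)| ≥ ε²L_f⁻²/2} for all distinct λ, λ' ∈ Λ, then |Λ| ≤ 2ε⁻²L_f². -/

import Mathlib

open Finset

/-- A Bourgain system of dimension `d` on a finite abelian group `G`: a family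
`(B ρ)_{ρ ∈ (0,2]}` of subsets satisfying nesting, containing `0`, symmetry, addition and
`2^d`-doubling. -/
def IsBourgainSystem {G : Type*} [AddCommGroup G] [Fintype G] (B : ℝ → Finset G) (d : ℝ) :
    Prop :=
  (∀ ρ ρ' : ℝ, 0 < ρ' → ρ' ≤ ρ → ρ ≤ 2 → B ρ' ⊆ B ρ) ∧
  (∀ ρ : ℝ, 0 < ρ → ρ ≤ 2 → (0 : G) ∈ B ρ) ∧
  (∀ ρ : ℝ, 0 < ρ → ρ ≤ 2 → ∀ x ∈ B ρ, -x ∈ B ρ) ∧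
  (∀ ρ ρ' : ℝ, 0 < ρ → 0 < ρ' → ρ + ρ' ≤ 1 →
    ∀ x ∈ B ρ, ∀ y ∈ B ρ', x + y ∈ B (ρ + ρ')) ∧
  (∀ ρ : ℝ, 0 < ρ → ρ ≤ 1 → ∃ X : Finset G, (X.card : ℝ) ≤ (2 : ℝ) ^ d ∧
    ∀ y ∈ B (2 * ρ), ∃ x ∈ X, y - x ∈ B ρ)

/-- The density `μ_G(B) = μ_G(B₁)` of a Bourgain system. -/
noncomputable def bsDensity {G : Type*} [AddCommGroup G] [Fintype G] (B : ℝ → Finset G) : ℝ :=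
  ((B 1).card : ℝ) / (Fintype.card G : ℝ)

/-- A Bourgain system of dimension `d` is regular if
`1 - 8d|η| ≤ μ_G(B₁)/μ_G(B_{1+η}) ≤ 1 + 8d|η|` whenever `d|η| ≤ 1/8`. -/
def IsRegularBS {G : Type*} [AddCommGroup G] [Fintype G] (B : ℝ → Finset G) (d : ℝ) : Prop :=
  ∀ η : ℝ, d * |η| ≤ 1 / 8 →
    1 - 8 * d * |η| ≤ ((B 1).card : ℝ) / ((B (1 + η)).card : ℝ) ∧
    ((B 1).card : ℝ) / ((B (1 + η)).card : ℝ) ≤ 1 + 8 * d * |η|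

set_option maxHeartbeats 1600000 in
/-- Local Bessel inequality, cardinality bound: if `Λ ⊆ Δ = {γ : |(f dβ)^(γ)| ≥ ε ‖f‖_{L¹(β)}}`
is such that `λ - λ' ∉ S = {γ : |β̂(γ)| ≥ ε² L_f⁻² / 2}` for all distinct `λ, λ' ∈ Λ`, then
`|Λ| ≤ 2 ε⁻² L_f²`. -/
theorem stmt19 {G : Type*} [AddCommGroup G] [Fintype G] (B : ℝ → Finset G) (d : ℝ)
    (hd : 1 ≤ d) (hB : IsBourgainSystem B d) (hreg : IsRegularBS B d)
    (f : G → ℂ) (ε L1 L2 Lf : ℝ)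
    (hL1 : L1 = (∑ u ∈ B 1, ‖f u‖) / ((B 1).card : ℝ))
    (hL2 : L2 = Real.sqrt ((∑ u ∈ B 1, ‖f u‖ ^ 2) / ((B 1).card : ℝ)))
    (hLf : Lf = L2 / L1) (hL1pos : 0 < L1) (hε : 0 < ε) (hε1 : ε ≤ 1)
    (Λ : Finset (AddChar G ℂ))
    (hΔ : ∀ lam ∈ Λ,
      ε * L1 ≤ ‖(∑ u ∈ B 1, f u * (starRingEnd ℂ) (lam u)) / ((B 1).card : ℂ)‖)
    (hsep : ∀ lam ∈ Λ, ∀ lam' ∈ Λ, lam ≠ lam' →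
      ‖(∑ u ∈ B 1, lam u * (starRingEnd ℂ) (lam' u)) / ((B 1).card : ℂ)‖
        < ε ^ 2 * Lf⁻¹ ^ 2 / 2) :
    (Λ.card : ℝ) ≤ 2 * ε⁻¹ ^ 2 * Lf ^ 2 := by
  classical
  -- Positivity of the right-hand side disposes of the empty case.
  rcases Λ.eq_empty_or_nonempty with rfl | hne
  · simp only [Finset.card_empty, Nat.cast_zero]
    positivity
  have hcardpos : 0 < Λ.card := Finset.card_pos.2 hne
  set n : ℝ := (Λ.card : ℝ) with hn
  have hn1 : (1 : ℝ) ≤ n := by rw [hn]; exact_mod_cast hcardpos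
  -- `B 1` is nonempty
  have hNnat : 0 < (B 1).card := by
    rcases Nat.eq_zero_or_pos (B 1).card with h | h
    · rw [hL1, h] at hL1pos; simp at hL1pos
    · exact h
  have hNr : (0 : ℝ) < ((B 1).card : ℝ) := by exact_mod_cast hNnat
  have hNc : ((B 1).card : ℂ) ≠ 0 := by exact_mod_cast hNnat.ne'
  -- facts about L2
  have hsum2 : (0 : ℝ) ≤ (∑ u ∈ B 1, ‖f u‖ ^ 2) / ((B 1).card : ℝ) := by positivity
  have hL2sq : L2 ^ 2 = (∑ u ∈ B 1, ‖f u‖ ^ 2) / ((B 1).card : ℝ) := by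
    rw [hL2, Real.sq_sqrt hsum2]
  have hL2nonneg : 0 ≤ L2 := by rw [hL2]; exact Real.sqrt_nonneg _
  have hL2pos : 0 < L2 := by
    rcases hL2nonneg.lt_or_eq with h | h
    · exact h
    exfalso
    have h2 : (∑ u ∈ B 1, ‖f u‖ ^ 2) = 0 := by
      have := hL2sq; rw [← h] at this
      field_simp at this
      linarith [this]
    have hz : ∀ u ∈ B 1, ‖f u‖ ^ 2 = 0 :=
      (Finset.sum_eq_zero_iff_of_nonneg (fun u _ => by positivity)).1 h2
    have hz' : ∑ u ∈ B 1, ‖f u‖ = 0 :=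
      Finset.sum_eq_zero fun u hu => by
        have := hz u hu; nlinarith [norm_nonneg (f u)]
    rw [hL1, hz'] at hL1pos
    simp at hL1pos
  -- Fourier coefficients
  set c : AddChar G ℂ → ℂ :=
    fun lam => (∑ u ∈ B 1, f u * (starRingEnd ℂ) (lam u)) / ((B 1).card : ℂ) with hc
  set T : ℝ := ∑ lam ∈ Λ, ‖c lam‖ ^ 2 with hT
  have hΔ' : ∀ lam ∈ Λ, ε * L1 ≤ ‖c lam‖ := hΔ
  -- lower bound on T
  have hTlower : n * (ε * L1) ^ 2 ≤ T := by
    have : ∑ _lam ∈ Λ, (ε * L1) ^ 2 ≤ T :=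
      Finset.sum_le_sum fun lam hl =>
        pow_le_pow_left₀ (by positivity) (hΔ' lam hl) 2
    simpa [Finset.sum_const, nsmul_eq_mul, hn] using this
  have hεL1 : 0 < ε * L1 := by positivity
  have hTpos : 0 < T := lt_of_lt_of_le (by nlinarith) hTlower
  -- the dual function g
  set g : G → ℂ := fun x => ∑ lam ∈ Λ, c lam * lam x with hg
  -- key identity: ∑_x f x * conj (g x) = N * ∑ conj(c) * c
  have key1 : ∑ x ∈ B 1, f x * (starRingEnd ℂ) (g x)
      = ((B 1).card : ℂ) * ∑ lam ∈ Λ, (starRingEnd ℂ) (c lam) * c lam := by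
    have expand : ∀ x, (starRingEnd ℂ) (g x)
        = ∑ lam ∈ Λ, (starRingEnd ℂ) (c lam) * (starRingEnd ℂ) (lam x) := by
      intro x; simp [hg, map_sum, map_mul]
    calc ∑ x ∈ B 1, f x * (starRingEnd ℂ) (g x)
        = ∑ x ∈ B 1, ∑ lam ∈ Λ, (starRingEnd ℂ) (c lam) * (f x * (starRingEnd ℂ) (lam x)) := by
          refine Finset.sum_congr rfl fun x _ => ?_
          rw [expand, Finset.mul_sum]
          exact Finset.sum_congr rfl fun lam _ => by ring
      _ = ∑ lam ∈ Λ, (starRingEnd ℂ) (c lam) * ∑ x ∈ B 1, f x * (starRingEnd ℂ) (lam x) := by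
          rw [Finset.sum_comm]
          exact Finset.sum_congr rfl fun lam _ => by rw [Finset.mul_sum]
      _ = ∑ lam ∈ Λ, (starRingEnd ℂ) (c lam) * (((B 1).card : ℂ) * c lam) := by
          refine Finset.sum_congr rfl fun lam _ => ?_
          rw [hc]; field_simp
      _ = ((B 1).card : ℂ) * ∑ lam ∈ Λ, (starRingEnd ℂ) (c lam) * c lam := by
          rw [Finset.mul_sum]
          exact Finset.sum_congr rfl fun lam _ => by ring
  have hTc : ((T : ℝ) : ℂ) = ∑ lam ∈ Λ, (starRingEnd ℂ) (c lam) * c lam := by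
    rw [hT]
    push_cast
    refine Finset.sum_congr rfl fun lam _ => ?_
    rw [mul_comm, Complex.mul_conj, Complex.normSq_eq_norm_sq]
    push_cast
    ring
  -- Cauchy-Schwarz: (N*T)^2 ≤ (N * L2^2) * W
  set W : ℝ := ∑ x ∈ B 1, ‖g x‖ ^ 2 with hW
  have hCS : (((B 1).card : ℝ) * T) ^ 2 ≤ (((B 1).card : ℝ) * L2 ^ 2) * W := by
    have h1 : ((B 1).card : ℝ) * T
        = ‖∑ x ∈ B 1, f x * (starRingEnd ℂ) (g x)‖ := by
      rw [key1, ← hTc, norm_mul, Complex.norm_natCast, Complex.norm_real, Real.norm_eq_abs,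
        abs_of_nonneg hTpos.le]
    have h2 : ‖∑ x ∈ B 1, f x * (starRingEnd ℂ) (g x)‖
        ≤ ∑ x ∈ B 1, ‖f x‖ * ‖g x‖ := by
      refine (norm_sum_le _ _).trans ?_
      exact le_of_eq (Finset.sum_congr rfl fun x _ => by
        rw [norm_mul, Complex.norm_conj])
    have h3 : (∑ x ∈ B 1, ‖f x‖ * ‖g x‖) ^ 2
        ≤ (∑ x ∈ B 1, ‖f x‖ ^ 2) * W := by
      rw [hW]; exact Finset.sum_mul_sq_le_sq_mul_sq _ _ _
    have h4 : (∑ x ∈ B 1, ‖f x‖ ^ 2) = ((B 1).card : ℝ) * L2 ^ 2 := by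
      rw [hL2sq]; field_simp
    have h5 : (((B 1).card : ℝ) * T) ^ 2
        ≤ (∑ x ∈ B 1, ‖f x‖ * ‖g x‖) ^ 2 := by
      rw [h1]
      exact pow_le_pow_left₀ (norm_nonneg _) h2 2
    calc (((B 1).card : ℝ) * T) ^ 2
        ≤ (∑ x ∈ B 1, ‖f x‖ * ‖g x‖) ^ 2 := h5
      _ ≤ (∑ x ∈ B 1, ‖f x‖ ^ 2) * W := h3
      _ = (((B 1).card : ℝ) * L2 ^ 2) * W := by rw [h4]
  -- almost orthogonality: W ≤ N * (T + δ * n * T)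
  set δ : ℝ := ε ^ 2 * Lf⁻¹ ^ 2 / 2 with hδ
  have hδnonneg : 0 ≤ δ := by positivity
  set Sm : ℝ := ∑ lam ∈ Λ, ‖c lam‖ with hSm
  have hSmnonneg : 0 ≤ Sm := Finset.sum_nonneg fun lam _ => norm_nonneg _
  have hSmsq : Sm ^ 2 ≤ n * T := by
    have := sq_sum_le_card_mul_sum_sq (s := Λ) (f := fun lam => ‖c lam‖)
    simpa [hSm, hT, hn] using this
  have hWbound : W ≤ ((B 1).card : ℝ) * T + ((B 1).card : ℝ) * δ * Sm ^ 2 := by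
    -- W as a complex double sum
    have hWc : ((W : ℝ) : ℂ) = ∑ lam ∈ Λ, ∑ lam' ∈ Λ,
        c lam * (starRingEnd ℂ) (c lam') *
          ∑ x ∈ B 1, lam x * (starRingEnd ℂ) (lam' x) := by
      have : ((W : ℝ) : ℂ) = ∑ x ∈ B 1, g x * (starRingEnd ℂ) (g x) := by
        rw [hW]; push_cast
        refine Finset.sum_congr rfl fun x _ => ?_
        rw [Complex.mul_conj, Complex.normSq_eq_norm_sq]; push_cast; ring
      rw [this]
      have expand : ∀ x ∈ B 1, g x * (starRingEnd ℂ) (g x)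
          = ∑ lam ∈ Λ, ∑ lam' ∈ Λ,
              c lam * (starRingEnd ℂ) (c lam') * (lam x * (starRingEnd ℂ) (lam' x)) := by
        intro x _
        have hconj : (starRingEnd ℂ) (g x)
            = ∑ lam' ∈ Λ, (starRingEnd ℂ) (c lam') * (starRingEnd ℂ) (lam' x) := by
          rw [hg]
          rw [map_sum]
          exact Finset.sum_congr rfl fun lam' _ => by rw [map_mul]
        rw [hconj]
        show (∑ lam ∈ Λ, c lam * lam x) * _ = _
        rw [Finset.sum_mul_sum]
        exact Finset.sum_congr rfl fun lam _ =>
          Finset.sum_congr rfl fun lam' _ => by ring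
      rw [Finset.sum_congr rfl expand, Finset.sum_comm]
      refine Finset.sum_congr rfl fun lam _ => ?_
      rw [Finset.sum_comm]
      refine Finset.sum_congr rfl fun lam' _ => ?_
      rw [Finset.mul_sum]
    -- bound the double sum
    have habs : W ≤ ∑ lam ∈ Λ, ∑ lam' ∈ Λ,
        ‖c lam * (starRingEnd ℂ) (c lam') *
          ∑ x ∈ B 1, lam x * (starRingEnd ℂ) (lam' x)‖ := by
      have hWe : W = ‖((W : ℝ) : ℂ)‖ := by
        rw [Complex.norm_real, Real.norm_eq_abs, abs_of_nonneg]
        rw [hW]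
        exact Finset.sum_nonneg fun x _ => by positivity
      rw [hWe, hWc]
      refine (norm_sum_le _ _).trans ?_
      exact Finset.sum_le_sum fun lam _ => norm_sum_le _ _
    refine habs.trans ?_
    -- per-λ bound
    have hrow : ∀ lam ∈ Λ, (∑ lam' ∈ Λ,
        ‖c lam * (starRingEnd ℂ) (c lam') *
          ∑ x ∈ B 1, lam x * (starRingEnd ℂ) (lam' x)‖)
        ≤ ((B 1).card : ℝ) * ‖c lam‖ ^ 2
          + ((B 1).card : ℝ) * δ * (‖c lam‖ * Sm) := by
      intro lam hlam
      rw [← Finset.add_sum_erase _ _ hlam]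
      have hdiag : ‖c lam * (starRingEnd ℂ) (c lam) *
          ∑ x ∈ B 1, lam x * (starRingEnd ℂ) (lam x)‖
          = ((B 1).card : ℝ) * ‖c lam‖ ^ 2 := by
        have hS : ∑ x ∈ B 1, lam x * (starRingEnd ℂ) (lam x) = ((B 1).card : ℂ) := by
          have hone : ∀ x ∈ B 1, lam x * (starRingEnd ℂ) (lam x) = 1 := by
            intro x _
            rw [Complex.mul_conj, Complex.normSq_eq_norm_sq,
              AddChar.norm_apply]
            norm_num
          rw [Finset.sum_congr rfl hone, Finset.sum_const, nsmul_eq_mul, mul_one]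
        rw [hS, norm_mul, norm_mul, Complex.norm_conj, Complex.norm_natCast]
        ring
      have hoff : (∑ lam' ∈ Λ.erase lam,
          ‖c lam * (starRingEnd ℂ) (c lam') *
            ∑ x ∈ B 1, lam x * (starRingEnd ℂ) (lam' x)‖)
          ≤ ((B 1).card : ℝ) * δ * (‖c lam‖ * Sm) := by
        have hterm : ∀ lam' ∈ Λ.erase lam,
            ‖c lam * (starRingEnd ℂ) (c lam') *
              ∑ x ∈ B 1, lam x * (starRingEnd ℂ) (lam' x)‖
            ≤ ((B 1).card : ℝ) * δ * (‖c lam‖ * ‖c lam'‖) := by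
          intro lam' hlam'
          obtain ⟨hne', hlam'Λ⟩ := Finset.mem_erase.1 hlam'
          have hs := (hsep lam hlam lam' hlam'Λ (Ne.symm hne')).le
          have habsS : ‖∑ x ∈ B 1, lam x * (starRingEnd ℂ) (lam' x)‖
              ≤ ((B 1).card : ℝ) * δ := by
            have : ‖(∑ x ∈ B 1, lam x * (starRingEnd ℂ) (lam' x))
                / ((B 1).card : ℂ)‖ ≤ δ := hs
            rw [norm_div, Complex.norm_natCast, div_le_iff₀ hNr] at this
            linarith [this]
          calc ‖c lam * (starRingEnd ℂ) (c lam') *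
                ∑ x ∈ B 1, lam x * (starRingEnd ℂ) (lam' x)‖
              = ‖c lam‖ * ‖c lam'‖ *
                ‖∑ x ∈ B 1, lam x * (starRingEnd ℂ) (lam' x)‖ := by
                rw [norm_mul, norm_mul, Complex.norm_conj]
            _ ≤ ‖c lam‖ * ‖c lam'‖ * (((B 1).card : ℝ) * δ) := by
                exact mul_le_mul_of_nonneg_left habsS (by positivity)
            _ = ((B 1).card : ℝ) * δ * (‖c lam‖ * ‖c lam'‖) := by
                ring
        have hKnonneg : 0 ≤ ((B 1).card : ℝ) * δ * ‖c lam‖ :=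
          mul_nonneg (mul_nonneg hNr.le hδnonneg) (norm_nonneg _)
        have hsub : (∑ lam' ∈ Λ.erase lam, ‖c lam'‖) ≤ Sm := by
          rw [hSm]
          exact Finset.sum_le_sum_of_subset_of_nonneg (Finset.erase_subset _ _)
            (fun lam' _ _ => norm_nonneg _)
        calc (∑ lam' ∈ Λ.erase lam, ‖c lam * (starRingEnd ℂ) (c lam') *
              ∑ x ∈ B 1, lam x * (starRingEnd ℂ) (lam' x)‖)
            ≤ ∑ lam' ∈ Λ.erase lam,
              ((B 1).card : ℝ) * δ * (‖c lam‖ * ‖c lam'‖) :=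
              Finset.sum_le_sum hterm
          _ = ((B 1).card : ℝ) * δ * ‖c lam‖ *
              ∑ lam' ∈ Λ.erase lam, ‖c lam'‖ := by
              rw [Finset.mul_sum]
              exact Finset.sum_congr rfl fun lam' _ => by ring
          _ ≤ ((B 1).card : ℝ) * δ * ‖c lam‖ * Sm :=
              mul_le_mul_of_nonneg_left hsub hKnonneg
          _ = ((B 1).card : ℝ) * δ * (‖c lam‖ * Sm) := by ring
      rw [hdiag]
      exact add_le_add_right hoff _
    calc (∑ lam ∈ Λ, ∑ lam' ∈ Λ, ‖c lam * (starRingEnd ℂ) (c lam') *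
          ∑ x ∈ B 1, lam x * (starRingEnd ℂ) (lam' x)‖)
        ≤ ∑ lam ∈ Λ, (((B 1).card : ℝ) * ‖c lam‖ ^ 2
          + ((B 1).card : ℝ) * δ * (‖c lam‖ * Sm)) :=
          Finset.sum_le_sum hrow
      _ = ((B 1).card : ℝ) * T + ((B 1).card : ℝ) * δ * Sm ^ 2 := by
          rw [Finset.sum_add_distrib]
          congr 1
          · rw [hT, Finset.mul_sum]
          · calc ∑ lam ∈ Λ, ((B 1).card : ℝ) * δ * (‖c lam‖ * Sm)
                = ((B 1).card : ℝ) * δ * Sm * ∑ lam ∈ Λ, ‖c lam‖ := by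
                  rw [Finset.mul_sum]
                  exact Finset.sum_congr rfl fun lam _ => by ring
              _ = ((B 1).card : ℝ) * δ * Sm ^ 2 := by rw [← hSm]; ring
  -- combine everything
  clear_value c g T W Sm δ n
  have hW2 : W ≤ ((B 1).card : ℝ) * (T + δ * (n * T)) := by
    have h1 : ((B 1).card : ℝ) * δ * Sm ^ 2 ≤ ((B 1).card : ℝ) * δ * (n * T) :=
      mul_le_mul_of_nonneg_left hSmsq (mul_nonneg hNr.le hδnonneg)
    have hexp : ((B 1).card : ℝ) * (T + δ * (n * T))
        = ((B 1).card : ℝ) * T + ((B 1).card : ℝ) * δ * (n * T) := by ring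
    linarith [hWbound, h1, hexp.le, hexp.ge]
  have hT2 : T ^ 2 ≤ L2 ^ 2 * (T + δ * (n * T)) := by
    have h := hCS.trans (mul_le_mul_of_nonneg_left hW2
      (mul_nonneg hNr.le (sq_nonneg L2)))
    have e1 : (((B 1).card : ℝ) * T) ^ 2 = ((B 1).card : ℝ) ^ 2 * T ^ 2 := by ring
    have e2 : ((B 1).card : ℝ) * L2 ^ 2 * (((B 1).card : ℝ) * (T + δ * (n * T)))
        = ((B 1).card : ℝ) ^ 2 * (L2 ^ 2 * (T + δ * (n * T))) := by ring
    rw [e1, e2] at h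
    have hN2 : (0 : ℝ) < ((B 1).card : ℝ) ^ 2 := by positivity
    exact le_of_mul_le_mul_left h hN2
  have hTupper : T ≤ L2 ^ 2 * (1 + δ * n) := by
    have e : L2 ^ 2 * (T + δ * (n * T)) = T * (L2 ^ 2 * (1 + δ * n)) := by ring
    rw [e, pow_two] at hT2
    exact le_of_mul_le_mul_left hT2 hTpos
  -- δ * L2^2 = ε^2 * L1^2 / 2
  have hLfinv : Lf⁻¹ = L1 / L2 := by
    rw [hLf]
    rw [inv_div]
  have hδL2 : δ * L2 ^ 2 = ε ^ 2 * L1 ^ 2 / 2 := by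
    have hL2ne : L2 ≠ 0 := hL2pos.ne'
    calc δ * L2 ^ 2
        = ε ^ 2 / 2 * (L1 ^ 2 / L2 ^ 2 * L2 ^ 2) := by
          rw [hδ, hLfinv, div_pow]; ring
      _ = ε ^ 2 / 2 * L1 ^ 2 := by
          rw [div_mul_cancel₀ _ (pow_ne_zero 2 hL2ne)]
      _ = ε ^ 2 * L1 ^ 2 / 2 := by ring
  have hfinal : n * (ε * L1) ^ 2 ≤ L2 ^ 2 + n * (ε ^ 2 * L1 ^ 2 / 2) := by
    calc n * (ε * L1) ^ 2 ≤ T := hTlower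
      _ ≤ L2 ^ 2 * (1 + δ * n) := hTupper
      _ = L2 ^ 2 + n * (δ * L2 ^ 2) := by ring
      _ = L2 ^ 2 + n * (ε ^ 2 * L1 ^ 2 / 2) := by rw [hδL2]
  clear hB hreg hΔ hsep hΔ' key1 hTc hCS hWbound hW2 hT2 hTupper hTlower hδL2
  clear hc hg hT hW hSm hSmnonneg hSmsq hδ hδnonneg hLfinv hL1 hL2 hL2sq hsum2
  clear hTpos hεL1 g c W Sm T δ f hd d hNnat hNr hNc B
  have hmain : n * (ε ^ 2 * L1 ^ 2) ≤ 2 * L2 ^ 2 := by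
    have e : n * (ε * L1) ^ 2 = n * (ε ^ 2 * L1 ^ 2) := by ring
    have e2 : n * (ε ^ 2 * L1 ^ 2 / 2) = n * (ε ^ 2 * L1 ^ 2) / 2 := by ring
    linarith [hfinal, e.le, e.ge, e2.le, e2.ge]
  have hεL1sq : (0 : ℝ) < ε ^ 2 * L1 ^ 2 := by positivity
  have h2 : n ≤ 2 * L2 ^ 2 / (ε ^ 2 * L1 ^ 2) := by
    rw [le_div_iff₀ hεL1sq]
    linarith [hmain]
  have hLfsq : Lf ^ 2 = L2 ^ 2 / L1 ^ 2 := by rw [hLf, div_pow]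
  have h3 : 2 * L2 ^ 2 / (ε ^ 2 * L1 ^ 2) = 2 * ε⁻¹ ^ 2 * Lf ^ 2 := by
    rw [hLfsq, inv_pow, div_eq_mul_inv, div_eq_mul_inv, mul_inv]
    ring
  exact h2.trans_eq h3
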